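/- Let ξ₁, ξ₂, … be i.i.d. random variables with P(ξ₁ = -1) = P(ξ₁ = +1) = 1/2, and let φₙ : {-1,+1}ⁿ → {-1,+1} be functions. Define ηₙ = φₙ(ξ₁,…,ξₙ). Then the sequence (ηₙ) has the same joint distribution as (ξₙ) if and only if each φₙ can be written as φₙ(u₁,…,uₙ) = ψₙ₋₁(u₁,…,uₙ₋₁)·uₙ for some function ψₙ₋₁ : {-1,+1}ⁿ⁻¹ → {-1,+1} (with ψ₀ a constant in {-1,+1}). -/

import Mathlib

open MeasureTheory ProbabilityTheory
open scoped ENNReal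

lemma aux_msA {n : ℕ} (s : Set (Fin n → ℤ)) : MeasurableSet s := s.to_countable.measurableSet

lemma aux_mA {n : ℕ} {α : Type*} [MeasurableSpace α] {f : α → Fin n → ℤ}
    (hf : ∀ i, Measurable fun a => f a i) : Measurable f := measurable_pi_iff.mpr hf

lemma aux_mB {n : ℕ} {β : Type*} [MeasurableSpace β] (f : (Fin n → ℤ) → β) :
    Measurable f := fun _ _ => aux_msA _

def Smap (n : ℕ) : Set (Fin n → ℤ) := {u | ∀ i, u i = 1 ∨ u i = -1}

lemma Smap_finite (n : ℕ) : (Smap n).Finite := by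
  have h : Smap n ⊆ Set.pi Set.univ (fun _ : Fin n => ({1, -1} : Set ℤ)) := by
    intro u hu i _
    rcases hu i with h | h <;> simp [h]
  exact (Set.Finite.pi fun _ => Set.toFinite _).subset h

def Fmap (φ : (n : ℕ) → (Fin (n + 1) → ℤ) → ℤ) (n : ℕ) (u : Fin n → ℤ) (i : Fin n) : ℤ :=
  φ i.val (fun j => u ⟨j.val, Nat.lt_of_lt_of_le j.isLt i.isLt⟩)

lemma Fmap_mapsTo {φ : (n : ℕ) → (Fin (n + 1) → ℤ) → ℤ}
    (hφ : ∀ n (u : Fin (n + 1) → ℤ), (∀ i, u i = 1 ∨ u i = -1) → φ n u = 1 ∨ φ n u = -1)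
    (n : ℕ) : Set.MapsTo (Fmap φ n) (Smap n) (Smap n) :=
  fun u hu i => hφ i.val _ (fun _ => hu _)

lemma Fmap_form {φ : (n : ℕ) → (Fin (n + 1) → ℤ) → ℤ} {ψ : (n : ℕ) → (Fin n → ℤ) → ℤ}
    (hform : ∀ n (u : Fin (n + 1) → ℤ), (∀ i, u i = 1 ∨ u i = -1) →
      φ n u = ψ n (fun i => u i.castSucc) * u (Fin.last n))
    {n : ℕ} {u : Fin n → ℤ} (hu : ∀ i, u i = 1 ∨ u i = -1) (i : Fin n) :
    Fmap φ n u i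
      = ψ i.val (fun j : Fin i.val => u ⟨j.val, j.isLt.trans i.isLt⟩) * u i := by
  unfold Fmap
  rw [hform i.val _ (fun _ => hu _)]
  congr 1

lemma Fmap_injOn {φ : (n : ℕ) → (Fin (n + 1) → ℤ) → ℤ} {ψ : (n : ℕ) → (Fin n → ℤ) → ℤ}
    (hψ : ∀ n (v : Fin n → ℤ), (∀ i, v i = 1 ∨ v i = -1) → ψ n v = 1 ∨ ψ n v = -1)
    (hform : ∀ n (u : Fin (n + 1) → ℤ), (∀ i, u i = 1 ∨ u i = -1) →
      φ n u = ψ n (fun i => u i.castSucc) * u (Fin.last n))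
    (n : ℕ) : Set.InjOn (Fmap φ n) (Smap n) := by
  intro u hu u' hu' h
  suffices H : ∀ k, ∀ hk : k < n, u ⟨k, hk⟩ = u' ⟨k, hk⟩ by
    funext i
    have := H i.val i.isLt
    rwa [Fin.eta] at this
  intro k
  induction k using Nat.strong_induction_on with
  | _ k IH =>
    intro hk
    have h1 := congrFun h ⟨k, hk⟩
    rw [Fmap_form hform hu ⟨k, hk⟩, Fmap_form hform hu' ⟨k, hk⟩] at h1
    have hpre : (fun j : Fin k => u ⟨j.val, j.isLt.trans hk⟩)
        = fun j : Fin k => u' ⟨j.val, j.isLt.trans hk⟩ :=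
      funext fun j => IH j.val j.isLt _
    rw [hpre] at h1
    have hc := hψ k (fun j : Fin k => u' ⟨j.val, j.isLt.trans hk⟩) (fun _ => hu' _)
    have hcne : ψ k (fun j : Fin k => u' ⟨j.val, j.isLt.trans hk⟩) ≠ 0 := by
      rcases hc with h | h <;> rw [h] <;> norm_num
    exact mul_left_cancel₀ hcne h1

lemma snoc_agree {n : ℕ} (v : Fin n → ℤ) (a b : ℤ) (k : Fin (n + 1)) (hk : k.val < n) :
    (Fin.snoc v a : Fin (n + 1) → ℤ) k = (Fin.snoc v b : Fin (n + 1) → ℤ) k := by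
  have h : k = Fin.castSucc ⟨k.val, hk⟩ := Fin.ext rfl
  rw [h, Fin.snoc_castSucc, Fin.snoc_castSucc]

theorem stmt0 {Ω : Type*} [MeasurableSpace Ω] (μ : Measure Ω) [IsProbabilityMeasure μ]
    (ξ : ℕ → Ω → ℤ) (hmeas : ∀ n, Measurable (ξ n))
    (hindep : iIndepFun ξ μ)
    (hdist : ∀ n, μ {ω | ξ n ω = 1} = 1/2 ∧ μ {ω | ξ n ω = -1} = 1/2)
    (φ : (n : ℕ) → (Fin (n + 1) → ℤ) → ℤ)
    (hφ : ∀ n (u : Fin (n + 1) → ℤ), (∀ i, u i = 1 ∨ u i = -1) →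
      φ n u = 1 ∨ φ n u = -1)
    (η : ℕ → Ω → ℤ) (hη : ∀ n ω, η n ω = φ n (fun i => ξ i.val ω)) :
    (∀ n : ℕ, Measure.map (fun ω (i : Fin n) => η i.val ω) μ
        = Measure.map (fun ω (i : Fin n) => ξ i.val ω) μ)
      ↔ ∃ ψ : (n : ℕ) → (Fin n → ℤ) → ℤ,
          (∀ n (v : Fin n → ℤ), (∀ i, v i = 1 ∨ v i = -1) →
            ψ n v = 1 ∨ ψ n v = -1) ∧
          ∀ n (u : Fin (n + 1) → ℤ), (∀ i, u i = 1 ∨ u i = -1) →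
            φ n u = ψ n (fun i => u i.castSucc) * u (Fin.last n) := by
  have hmeasvec : ∀ n : ℕ, Measurable (fun ω (i : Fin n) => ξ i.val ω) :=
    fun n => aux_mA (fun i => hmeas i.val)
  set ν : (n : ℕ) → Measure (Fin n → ℤ) :=
    fun n => Measure.map (fun ω (i : Fin n) => ξ i.val ω) μ with hν
  -- η-vector is the image of ξ-vector under Fmap
  have hcomp : ∀ n : ℕ, (fun ω (i : Fin n) => η i.val ω)
      = (Fmap φ n) ∘ (fun ω (i : Fin n) => ξ i.val ω) := by
    intro n; funext ω; funext i
    exact hη i.val ω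
  have hmapη : ∀ n : ℕ, Measure.map (fun ω (i : Fin n) => η i.val ω) μ
      = (ν n).map (Fmap φ n) := by
    intro n
    rw [hcomp n, ← Measure.map_map (aux_mB _) (hmeasvec n)]
  -- singleton measures
  have hsing : ∀ (n : ℕ) (w : Fin n → ℤ),
      ν n {w} = ∏ i : Fin n, μ {ω | ξ i.val ω = w i} := by
    intro n w
    rw [hν, Measure.map_apply (hmeasvec n) (aux_msA _)]
    set s : ℕ → Set Ω :=
      fun k => if h : k < n then {ω | ξ k ω = w ⟨k, h⟩} else Set.univ with hs
    have hpre : (fun ω (i : Fin n) => ξ i.val ω) ⁻¹' {w} = ⋂ k ∈ Finset.range n, s k := by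
      ext ω
      simp only [Set.mem_preimage, Set.mem_singleton_iff, funext_iff, Set.mem_iInter,
        Finset.mem_range, hs]
      constructor
      · intro h k hk
        rw [dif_pos hk]
        exact h ⟨k, hk⟩
      · intro h i
        have := h i.val i.isLt
        rwa [dif_pos i.isLt, Fin.eta] at this
    rw [hpre, hindep.meas_biInter (S := Finset.range n)]
    · rw [← Fin.prod_univ_eq_prod_range (fun k => μ (s k)) n]
      refine Finset.prod_congr rfl fun i _ => ?_
      rw [hs]
      simp only [dif_pos i.isLt, Fin.eta]
    · intro k hk
      have h := Finset.mem_range.mp hk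
      rw [hs]
      simp only [dif_pos h]
      exact ⟨{w ⟨k, h⟩}, measurableSet_singleton _, rfl⟩
  have hval1 : ∀ (n : ℕ) (w : Fin n → ℤ), w ∈ Smap n →
      ν n {w} = ((1 : ℝ≥0∞)/2) ^ n := by
    intro n w hw
    rw [hsing n w]
    have : ∀ i : Fin n, μ {ω | ξ i.val ω = w i} = (1 : ℝ≥0∞)/2 := by
      intro i
      rcases hw i with h | h <;> rw [h]
      · exact (hdist i.val).1
      · exact (hdist i.val).2
    rw [Finset.prod_congr rfl (fun i _ => this i), Finset.prod_const, Finset.card_univ,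
      Fintype.card_fin]
  have hval0 : ∀ (n : ℕ) (w : Fin n → ℤ), w ∉ Smap n → ν n {w} = 0 := by
    intro n w hw
    rw [hsing n w]
    simp only [Smap, Set.mem_setOf_eq, not_forall] at hw
    obtain ⟨i, hi⟩ := hw
    push_neg at hi
    refine Finset.prod_eq_zero (Finset.mem_univ i) ?_
    have hm1 : MeasurableSet {ω | ξ i.val ω = 1} := hmeas i.val (measurableSet_singleton 1)
    have hm2 : MeasurableSet {ω | ξ i.val ω = (-1 : ℤ)} :=
      hmeas i.val (measurableSet_singleton (-1))
    have hdisj : Disjoint {ω | ξ i.val ω = 1} {ω | ξ i.val ω = (-1 : ℤ)} := by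
      rw [Set.disjoint_left]
      intro ω h1 h2
      simp only [Set.mem_setOf_eq] at h1 h2
      omega
    have hu : μ ({ω | ξ i.val ω = 1} ∪ {ω | ξ i.val ω = (-1 : ℤ)}) = 1 := by
      rw [measure_union hdisj hm2, (hdist i.val).1, (hdist i.val).2, ENNReal.add_halves]
    have hc : μ ({ω | ξ i.val ω = 1} ∪ {ω | ξ i.val ω = (-1 : ℤ)})ᶜ = 0 := by
      rw [measure_compl (hm1.union hm2) (measure_ne_top μ _), hu, measure_univ, tsub_self]
    refine measure_mono_null ?_ hc
    intro ω hω
    simp only [Set.mem_setOf_eq] at hω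
    simp only [Set.mem_compl_iff, Set.mem_union, Set.mem_setOf_eq]
    rw [hω]
    push_neg
    exact hi
  have hSc : ∀ n : ℕ, ν n (Smap n)ᶜ = 0 := by
    intro n
    have h : (Smap n)ᶜ = ⋃ w ∈ (Smap n)ᶜ, {w} := (Set.biUnion_of_singleton _).symm
    rw [h, measure_biUnion_null_iff (Set.to_countable _)]
    intro w hw
    exact hval0 n w hw
  constructor
  · -- forward: distribution equality implies multiplicative form
    intro hmap
    refine ⟨fun n v => φ n (Fin.snoc v 1), ?_, ?_⟩
    · intro n v hv
      refine hφ n _ ?_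
      intro i
      refine Fin.lastCases ?_ ?_ i
      · rw [Fin.snoc_last]; left; rfl
      · intro j; rw [Fin.snoc_castSucc]; exact hv j
    · intro n u hu
      set v : Fin n → ℤ := fun i => u i.castSucc with hvdef
      show φ n u = φ n (Fin.snoc v 1) * u (Fin.last n)
      have hsn1 : ∀ i, (Fin.snoc v 1 : Fin (n + 1) → ℤ) i = 1
          ∨ (Fin.snoc v 1 : Fin (n + 1) → ℤ) i = -1 := by
        intro i
        refine Fin.lastCases ?_ ?_ i
        · rw [Fin.snoc_last]; left; rfl
        · intro j; rw [Fin.snoc_castSucc]; exact hu j.castSucc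
      have hsnm1 : ∀ i, (Fin.snoc v (-1) : Fin (n + 1) → ℤ) i = 1
          ∨ (Fin.snoc v (-1) : Fin (n + 1) → ℤ) i = -1 := by
        intro i
        refine Fin.lastCases ?_ ?_ i
        · rw [Fin.snoc_last]; right; rfl
        · intro j; rw [Fin.snoc_castSucc]; exact hu j.castSucc
      rcases hu (Fin.last n) with hl | hl
      · have he : (Fin.snoc v 1 : Fin (n + 1) → ℤ) = u := by
          funext i
          refine Fin.lastCases ?_ ?_ i
          · rw [Fin.snoc_last, hl]
          · intro j; rw [Fin.snoc_castSucc]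
        rw [he, hl, mul_one]
      · have hueq : u = (Fin.snoc v (-1) : Fin (n + 1) → ℤ) := by
          funext i
          refine (Fin.lastCases ?_ ?_ i : (Fin.snoc v (-1) : Fin (n + 1) → ℤ) i = u i).symm
          · rw [Fin.snoc_last, hl]
          · intro j; rw [Fin.snoc_castSucc]
        have hcontra : φ n (Fin.snoc v (-1) : Fin (n + 1) → ℤ) ≠ φ n (Fin.snoc v 1) := by
          intro heq
          set uP : Fin (n + 1) → ℤ := Fin.snoc v 1 with hup
          set uM : Fin (n + 1) → ℤ := Fin.snoc v (-1) with hun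
          have hSP : uP ∈ Smap (n + 1) := hsn1
          have hSM : uM ∈ Smap (n + 1) := hsnm1
          have hlastval : ∀ (x : Fin (n + 1) → ℤ), Fmap φ (n + 1) x (Fin.last n) = φ n x := by
            intro x
            exact congrArg (φ n) (funext fun j => congrArg x (Fin.eta j _))
          have hFeq : Fmap φ (n + 1) uM = Fmap φ (n + 1) uP := by
            funext i
            by_cases hi : i.val < n
            · unfold Fmap
              congr 1
              funext j
              exact snoc_agree v (-1) 1 _ (Nat.lt_of_le_of_lt (Nat.le_of_lt_succ j.isLt) hi)
            · have hin : i = Fin.last n := Fin.ext (by have := i.isLt; simp; omega)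
              subst hin
              rw [hlastval, hlastval]
              exact heq
          set w : Fin (n + 1) → ℤ := Fmap φ (n + 1) uP with hwdef
          have hwS : w ∈ Smap (n + 1) := Fmap_mapsTo hφ (n + 1) hSP
          have hne : uP ≠ uM := by
            intro h
            have h2 := congrFun h (Fin.last n)
            rw [hup, hun, Fin.snoc_last, Fin.snoc_last] at h2
            norm_num at h2
          have e2 : Measure.map (fun ω (i : Fin (n + 1)) => η i.val ω) μ {w}
              = ν (n + 1) (Fmap φ (n + 1) ⁻¹' {w}) := by
            rw [hmapη (n + 1), Measure.map_apply (aux_mB _) (aux_msA _)]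
          have e3 : ({uP} ∪ {uM} : Set (Fin (n + 1) → ℤ)) ⊆ Fmap φ (n + 1) ⁻¹' {w} := by
            intro x hx
            rw [Set.mem_preimage, Set.mem_singleton_iff]
            rcases hx with hx | hx <;> rw [Set.mem_singleton_iff] at hx <;> subst hx
            · rfl
            · exact hFeq
          have e4 : ν (n + 1) ({uP} ∪ {uM})
              = ((1 : ℝ≥0∞)/2) ^ (n + 1) + ((1 : ℝ≥0∞)/2) ^ (n + 1) := by
            rw [measure_union (Set.disjoint_singleton.mpr hne) (aux_msA _),
              hval1 _ _ hSP, hval1 _ _ hSM]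
          have hz : ((1 : ℝ≥0∞)/2) ^ (n + 1) ≠ 0 := by
            apply pow_ne_zero
            simp
          have ht : ((1 : ℝ≥0∞)/2) ^ (n + 1) ≠ ⊤ := by
            apply ENNReal.pow_ne_top
            simp
          have e5 : ((1 : ℝ≥0∞)/2) ^ (n + 1) + ((1 : ℝ≥0∞)/2) ^ (n + 1)
              ≤ ((1 : ℝ≥0∞)/2) ^ (n + 1) := by
            calc ((1 : ℝ≥0∞)/2) ^ (n + 1) + ((1 : ℝ≥0∞)/2) ^ (n + 1)
                = ν (n + 1) ({uP} ∪ {uM}) := e4.symm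
              _ ≤ ν (n + 1) (Fmap φ (n + 1) ⁻¹' {w}) := measure_mono e3
              _ = Measure.map (fun ω (i : Fin (n + 1)) => η i.val ω) μ {w} := e2.symm
              _ = ν (n + 1) {w} := by rw [hmap (n + 1)]
              _ = ((1 : ℝ≥0∞)/2) ^ (n + 1) := hval1 _ _ hwS
          exact absurd e5 (not_le.mpr (ENNReal.lt_add_right ht hz))
        rcases hφ n u hu with h1 | h1 <;> rcases hφ n (Fin.snoc v 1) hsn1 with h2 | h2
        · exact absurd (by rw [← hueq, h1, h2]) hcontra
        · rw [h1, h2, hl]; norm_num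
        · rw [h1, h2, hl]; norm_num
        · exact absurd (by rw [← hueq, h1, h2]) hcontra
  · -- backward: multiplicative form implies distribution equality
    rintro ⟨ψ, hψpm, hform⟩ n
    rw [hmapη n]
    have hbij : Set.BijOn (Fmap φ n) (Smap n) (Smap n) :=
      ((Smap_finite n).injOn_iff_bijOn_of_mapsTo (Fmap_mapsTo hφ n)).mp
        (Fmap_injOn hψpm hform n)
    refine Measure.ext_of_singleton fun w => ?_
    rw [Measure.map_apply (aux_mB _) (aux_msA _)]
    set A := Fmap φ n ⁻¹' {w} with hA
    have hd : ν n (A ∩ Smap n) + ν n (A \ Smap n) = ν n A :=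
      measure_inter_add_diff A (aux_msA _)
    have hdiff : ν n (A \ Smap n) = 0 :=
      measure_mono_null (Set.diff_subset_compl _ _) (hSc n)
    by_cases hw : w ∈ Smap n
    · obtain ⟨u₀, hu₀S, hu₀⟩ := hbij.surjOn hw
      have hAS : A ∩ Smap n = {u₀} := by
        ext u
        constructor
        · rintro ⟨hFu, huS⟩
          have hFu2 : Fmap φ n u = Fmap φ n u₀ := by
            rw [hu₀]; exact hFu
          exact hbij.injOn huS hu₀S hFu2
        · rintro rfl
          exact ⟨hu₀, hu₀S⟩
      rw [← hd, hAS, hdiff, add_zero, hval1 n u₀ hu₀S, hval1 n w hw]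
    · have hAS : A ∩ Smap n = ∅ := by
        ext u
        simp only [Set.mem_inter_iff, Set.mem_empty_iff_false, iff_false, not_and]
        intro hFu huS
        exact hw ((show Fmap φ n u = w from hFu) ▸ Fmap_mapsTo hφ n huS)
      rw [← hd, hAS, hdiff, measure_empty, add_zero, hval0 n w hw]
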